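/- In a graph G that maximizes RDD among all connected graphs on n vertices with exactly k cut vertices, every block of G is a complete graph. -/

import Mathlib

open Finset

open Classical in
/-- Reciprocal degree distance. -/
noncomputable def RDD {V : Type*} [Fintype V] (G : SimpleGraph V) : ℝ :=
  (∑ u : V, ∑ v : V, if u ≠ v then
      (((G.neighborSet u).ncard : ℝ) + ((G.neighborSet v).ncard : ℝ)) / (G.dist u v : ℝ)
    else 0) / 2

/-- `v` is a cut vertex of `G`: `G` is connected but deleting `v` disconnects it. -/
def IsCutVertex {V : Type*} (G : SimpleGraph V) (v : V) : Prop :=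
  G.Connected ∧ ¬ (G.induce ({v}ᶜ : Set V)).Connected

/-- A block of `G`: a maximal vertex set inducing a connected subgraph with no
cut vertices. -/
def IsBlock {V : Type*} (G : SimpleGraph V) (B : Set V) : Prop :=
  (G.induce B).Connected ∧ (∀ v : B, ¬ IsCutVertex (G.induce B) v) ∧
  ∀ C : Set V, B ⊆ C → (G.induce C).Connected →
    (∀ v : C, ¬ IsCutVertex (G.induce C) v) → B = C

/-- Add an edge between two distinct vertices. -/
def addEdge {V : Type*} (G : SimpleGraph V) (u v : V) (huv : u ≠ v) : SimpleGraph V where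
  Adj a b := G.Adj a b ∨ (a = u ∧ b = v) ∨ (a = v ∧ b = u)
  symm := ⟨fun a b h => by tauto⟩
  loopless := ⟨fun a h => by
    rcases h with h | ⟨h1, h2⟩ | ⟨h1, h2⟩
    · exact G.irrefl h
    · exact huv (h1.symm.trans h2)
    · exact huv (h2.symm.trans h1)⟩

@[simp] lemma addEdge_adj {V : Type*} (G : SimpleGraph V) (u v : V) (huv : u ≠ v) (a b : V) :
    (addEdge G u v huv).Adj a b ↔ G.Adj a b ∨ (a = u ∧ b = v) ∨ (a = v ∧ b = u) := Iff.rfl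

lemma reach_trans {α : Type*} {G H : SimpleGraph α}
    (h : ∀ a b, H.Adj a b → G.Reachable a b) {a b : α} (hr : H.Reachable a b) :
    G.Reachable a b := by
  obtain ⟨p⟩ := hr
  induction p with
  | nil => exact SimpleGraph.Reachable.refl _
  | cons hadj _ ih => exact (h _ _ hadj).trans ih

lemma reach_induce_mono {V : Type*} {G : SimpleGraph V} {s t : Set V} (hst : s ⊆ t) {a b : s}
    (h : (G.induce s).Reachable a b) : (G.induce t).Reachable ⟨a, hst a.2⟩ ⟨b, hst b.2⟩ :=
  h.map (⟨fun x => ⟨x.1, hst x.2⟩, fun hadj => hadj⟩ : G.induce s →g G.induce t)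

lemma reach_induce2 {V : Type*} {G : SimpleGraph V} {s : Set V} {t : Set s} {s' : Set V}
    (h : ∀ x : s, x ∈ t → (x : V) ∈ s') {a b : t}
    (hr : ((G.induce s).induce t).Reachable a b) :
    (G.induce s').Reachable ⟨a.1.1, h a.1 a.2⟩ ⟨b.1.1, h b.1 b.2⟩ :=
  hr.map (⟨fun x => ⟨x.1.1, h x.1 x.2⟩, fun hadj => hadj⟩ : (G.induce s).induce t →g G.induce s')

theorem blocks_complete_of_rdd_max {V : Type*} [Fintype V] (k : ℕ)
    (G : SimpleGraph V) (hconn : G.Connected)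
    (hcut : {v : V | IsCutVertex G v}.ncard = k)
    (hmax : ∀ H : SimpleGraph V, H.Connected →
      {v : V | IsCutVertex H v}.ncard = k → RDD H ≤ RDD G) :
    ∀ B : Set V, IsBlock G B → ∀ u v : V, u ∈ B → v ∈ B → u ≠ v → G.Adj u v := by
  classical
  intro B hB u v huB hvB huv
  by_contra hadj
  set H : SimpleGraph V := addEdge G u v huv with hHdef
  have hGH : G ≤ H := fun a b h => Or.inl h
  have hHconn : H.Connected := hconn.mono hGH
  -- u and v are reachable in G minus any vertex w (w possibly in B or not)
  have huvreach : ∀ (w : V) (hu' : u ∈ ({w}ᶜ : Set V)) (hv' : v ∈ ({w}ᶜ : Set V)),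
      (G.induce ({w}ᶜ : Set V)).Reachable ⟨u, hu'⟩ ⟨v, hv'⟩ := by
    intro w hu' hv'
    obtain ⟨hBconn, hBnocut, -⟩ := hB
    by_cases hwB : w ∈ B
    · have hnc := hBnocut ⟨w, hwB⟩
      rw [IsCutVertex] at hnc
      push_neg at hnc
      have hc2 := hnc hBconn
      have hu2 : (⟨u, huB⟩ : B) ∈ ({(⟨w, hwB⟩ : B)}ᶜ : Set B) := by
        simp only [Set.mem_compl_iff, Set.mem_singleton_iff, Subtype.mk.injEq]
        intro e; exact hu' (by simp [e])
      have hv2 : (⟨v, hvB⟩ : B) ∈ ({(⟨w, hwB⟩ : B)}ᶜ : Set B) := by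
        simp only [Set.mem_compl_iff, Set.mem_singleton_iff, Subtype.mk.injEq]
        intro e; exact hv' (by simp [e])
      have r := hc2.preconnected ⟨⟨u, huB⟩, hu2⟩ ⟨⟨v, hvB⟩, hv2⟩
      have hmem : ∀ x : B, x ∈ ({(⟨w, hwB⟩ : B)}ᶜ : Set B) → (x : V) ∈ ({w}ᶜ : Set V) := by
        intro x hx
        simp only [Set.mem_compl_iff, Set.mem_singleton_iff] at hx ⊢
        intro e; exact hx (Subtype.ext e)
      exact reach_induce2 hmem r
    · have hsub : B ⊆ ({w}ᶜ : Set V) := by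
        intro x hx
        simp only [Set.mem_compl_iff, Set.mem_singleton_iff]
        rintro rfl; exact hwB hx
      exact reach_induce_mono hsub (hBconn.preconnected ⟨u, huB⟩ ⟨v, hvB⟩)
  -- removing a vertex from H keeps connectivity iff it does for G
  have key : ∀ w : V, (H.induce ({w}ᶜ : Set V)).Connected → (G.induce ({w}ᶜ : Set V)).Connected := by
    intro w hHc
    rw [SimpleGraph.connected_iff] at hHc ⊢
    refine ⟨?_, hHc.2⟩
    intro a b
    refine reach_trans ?_ (hHc.1 a b)
    rintro ⟨x, hx⟩ ⟨y, hy⟩ (h | ⟨h1, h2⟩ | ⟨h1, h2⟩)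
    · exact SimpleGraph.Adj.reachable h
    · subst h1; subst h2; exact huvreach w hx hy
    · subst h1; subst h2; exact (huvreach w hy hx).symm
  -- the cut vertices of H are those of G
  have hsets : {x : V | IsCutVertex H x} = {x : V | IsCutVertex G x} := by
    ext w
    simp only [Set.mem_setOf_eq, IsCutVertex]
    constructor
    · rintro ⟨-, hn⟩
      exact ⟨hconn, fun hg => hn (hg.mono (fun a b h => Or.inl h))⟩
    · rintro ⟨-, hn⟩
      exact ⟨hHconn, fun hh => hn (key w hh)⟩
  -- degrees
  have hdeg : ∀ x : V, (G.neighborSet x).ncard ≤ (H.neighborSet x).ncard := fun x =>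
    Set.ncard_le_ncard (fun y hy => Or.inl hy) (Set.toFinite _)
  have hvnm : v ∉ G.neighborSet u := fun h => hadj h
  have hunm : u ∉ G.neighborSet v := fun h => hadj h.symm
  have hnu : H.neighborSet u = insert v (G.neighborSet u) := by
    ext y
    simp only [SimpleGraph.mem_neighborSet, hHdef, addEdge_adj, Set.mem_insert_iff]
    tauto
  have hnv : H.neighborSet v = insert u (G.neighborSet v) := by
    ext y
    simp only [SimpleGraph.mem_neighborSet, hHdef, addEdge_adj, Set.mem_insert_iff]
    tauto
  have hdegu : (G.neighborSet u).ncard < (H.neighborSet u).ncard := by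
    rw [hnu, Set.ncard_insert_of_notMem hvnm (Set.toFinite _)]; omega
  have hdegv : (G.neighborSet v).ncard < (H.neighborSet v).ncard := by
    rw [hnv, Set.ncard_insert_of_notMem hunm (Set.toFinite _)]; omega
  -- distances
  have hdist : ∀ x y : V, H.dist x y ≤ G.dist x y := by
    intro x y
    obtain ⟨p, hp⟩ := hconn.exists_walk_length_eq_dist x y
    calc H.dist x y ≤ (p.mapLe hGH).length := SimpleGraph.dist_le _
      _ = p.length := SimpleGraph.Walk.length_map _ _
      _ = G.dist x y := hp
  have hdposH : ∀ x y : V, x ≠ y → 0 < H.dist x y := fun x y h => hHconn.pos_dist_of_ne h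
  -- termwise comparison
  have hterm : ∀ x y : V,
      (if x ≠ y then ((G.neighborSet x).ncard + ((G.neighborSet y).ncard : ℝ)) / (G.dist x y : ℝ) else 0)
      ≤ (if x ≠ y then ((H.neighborSet x).ncard + ((H.neighborSet y).ncard : ℝ)) / (H.dist x y : ℝ) else 0) := by
    intro x y
    by_cases hxy : x ≠ y
    · rw [if_pos hxy, if_pos hxy]
      apply div_le_div₀
      · positivity
      · exact add_le_add (Nat.cast_le.2 (hdeg x)) (Nat.cast_le.2 (hdeg y))
      · exact_mod_cast hdposH x y hxy
      · exact_mod_cast hdist x y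
    · rw [if_neg hxy, if_neg hxy]
  have htermuv :
      (if u ≠ v then ((G.neighborSet u).ncard + ((G.neighborSet v).ncard : ℝ)) / (G.dist u v : ℝ) else 0)
      < (if u ≠ v then ((H.neighborSet u).ncard + ((H.neighborSet v).ncard : ℝ)) / (H.dist u v : ℝ) else 0) := by
    rw [if_pos huv, if_pos huv]
    apply div_lt_div₀
    · exact add_lt_add (Nat.cast_lt.2 hdegu) (Nat.cast_lt.2 hdegv)
    · exact_mod_cast hdist u v
    · positivity
    · exact_mod_cast hdposH u v huv
  -- the RDD strictly increases
  have hsum : RDD G < RDD H := by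
    have h2 : (∑ x : V, ∑ y : V, if x ≠ y then
        ((G.neighborSet x).ncard + ((G.neighborSet y).ncard : ℝ)) / (G.dist x y : ℝ) else 0)
        < ∑ x : V, ∑ y : V, if x ≠ y then
        ((H.neighborSet x).ncard + ((H.neighborSet y).ncard : ℝ)) / (H.dist x y : ℝ) else 0 := by
      apply Finset.sum_lt_sum
      · intro x _
        exact Finset.sum_le_sum fun y _ => hterm x y
      · refine ⟨u, Finset.mem_univ u, ?_⟩
        apply Finset.sum_lt_sum
        · intro y _; exact hterm u y
        · exact ⟨v, Finset.mem_univ v, htermuv⟩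
    simp only [RDD]
    linarith
  have := hmax H hHconn (by rw [hsets]; exact hcut)
  linarith
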